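/- Let β > 1 and let n ≥ 1 satisfy β^n ≥ 2. Let w be an admissible word of length n and let 0 ≤ δ_1 < δ_2. Then the set E_{n,β}(w, δ_1, δ_2) := {x ∈ I_{n,β}(w) : δ_1 ≤ |T_β^n(x) − x| ≤ δ_2}, where T_β^n(x) − x is the difference of real numbers in [0,1) and |·| is the absolute value, can be covered by 4 intervals each of length (δ_2 − δ_1)β^{−n}. (On each cylinder of order n, x ↦ T_β^n(x) − x is an affine map of slope β^n − 1.) -/

import Mathlib

/-- The β-transformation `x ↦ βx - ⌊βx⌋` on `[0,1)`. -/
noncomputable def betaT (β : ℝ) : ℝ → ℝ := fun x => Int.fract (β * x)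

/-- The cylinder of order `n` (with respect to base `β`) determined by the word `w`:
`I_{n,β}(w) = {x ∈ [0,1) : ε_i(x,β) = w_i, 1 ≤ i ≤ n}`. -/
noncomputable def cylinder (β : ℝ) (n : ℕ) (w : Fin n → ℤ) : Set ℝ :=
  {x | x ∈ Set.Ico (0 : ℝ) 1 ∧ ∀ i : Fin n, ⌊β * (betaT β)^[(i : ℕ)] x⌋ = w i}

lemma iterate_affine (β : ℝ) (n : ℕ) (w : Fin n → ℤ) (x : ℝ) (hx : x ∈ cylinder β n w)
    (k : ℕ) (hk : k ≤ n) :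
    (betaT β)^[k] x = β ^ k * x -
      ∑ i ∈ Finset.range k, β ^ (k - 1 - i) * ((if h : i < n then w ⟨i, h⟩ else 0 : ℤ) : ℝ) := by
  induction k with
  | zero => simp
  | succ k ih =>
    have hk' : k ≤ n := Nat.le_of_succ_le hk
    have hkn : k < n := hk
    rw [Function.iterate_succ_apply', ih hk']
    have hfl : ⌊β * (betaT β)^[k] x⌋ = w ⟨k, hkn⟩ := hx.2 ⟨k, hkn⟩
    have : betaT β ((betaT β)^[k] x) = β * (betaT β)^[k] x - (w ⟨k, hkn⟩ : ℝ) := by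
      rw [betaT, Int.fract, hfl]
    rw [ih hk'] at this
    have hexp : ∀ i ∈ Finset.range k, β * β ^ (k - 1 - i) = β ^ (k + 1 - 1 - i) := by
      intro i hi
      have hi' : i < k := Finset.mem_range.mp hi
      rw [← pow_succ']
      congr 1
      omega
    calc betaT β (β ^ k * x - ∑ i ∈ Finset.range k, β ^ (k - 1 - i) * ((if h : i < n then w ⟨i, h⟩ else 0 : ℤ) : ℝ))
        = β * (β ^ k * x - ∑ i ∈ Finset.range k, β ^ (k - 1 - i) * ((if h : i < n then w ⟨i, h⟩ else 0 : ℤ) : ℝ)) - (w ⟨k, hkn⟩ : ℝ) := this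
      _ = β ^ (k+1) * x - (∑ i ∈ Finset.range k, β ^ (k + 1 - 1 - i) * ((if h : i < n then w ⟨i, h⟩ else 0 : ℤ) : ℝ) + (w ⟨k, hkn⟩ : ℝ)) := by
          rw [mul_sub, Finset.mul_sum]
          rw [Finset.sum_congr rfl (fun i hi => by rw [← mul_assoc, hexp i hi])]
          ring
      _ = β ^ (k+1) * x - ∑ i ∈ Finset.range (k+1), β ^ (k + 1 - 1 - i) * ((if h : i < n then w ⟨i, h⟩ else 0 : ℤ) : ℝ) := by
          rw [Finset.sum_range_succ]
          have : k + 1 - 1 - k = 0 := by omega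
          rw [this, pow_zero, one_mul, dif_pos hkn]

/-- **Lemma 3.1.** Let `β > 1` and `n ≥ 1` with `β^n ≥ 2`. For any admissible word `w` of
length `n` and any `0 ≤ δ₁ < δ₂`, the set
`E_{n,β}(w,δ₁,δ₂) = {x ∈ I_{n,β}(w) : δ₁ ≤ |T_β^n(x) - x| ≤ δ₂}`
can be covered by `4` intervals of length `(δ₂ - δ₁) β^{-n}`. -/
theorem cover_E_by_four_intervals
    (β : ℝ) (hβ : 1 < β) (n : ℕ) (hn : 1 ≤ n) (hn2 : 2 ≤ β ^ n)
    (w : Fin n → ℤ) (hw : (cylinder β n w).Nonempty)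
    (δ₁ δ₂ : ℝ) (hδ₁ : 0 ≤ δ₁) (hδ : δ₁ < δ₂) :
    ∃ a : Fin 4 → ℝ,
      {x ∈ cylinder β n w | δ₁ ≤ |(betaT β)^[n] x - x| ∧ |(betaT β)^[n] x - x| ≤ δ₂} ⊆
        ⋃ k : Fin 4, Set.Icc (a k) (a k + (δ₂ - δ₁) * (β ^ n)⁻¹) := by
  set c : ℝ := ∑ i ∈ Finset.range n, β ^ (n - 1 - i) * ((if h : i < n then w ⟨i, h⟩ else 0 : ℤ) : ℝ) with hc
  set s : ℝ := β ^ n - 1 with hs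
  have hβn : (0:ℝ) < β ^ n := by positivity
  have hspos : (0:ℝ) < s := by simp [hs]; linarith
  set L : ℝ := (δ₂ - δ₁) * (β ^ n)⁻¹ with hL
  have hLpos : 0 < L := by
    apply mul_pos (by linarith) (by positivity)
  -- key length bound: (δ₂ - δ₁)/s ≤ 2L
  have hlen : (δ₂ - δ₁) / s ≤ 2 * L := by
    rw [div_le_iff₀ hspos, hL]
    have h1 : (β ^ n)⁻¹ * β ^ n = 1 := inv_mul_cancel₀ (ne_of_gt hβn)
    nlinarith [mul_pos (sub_pos.mpr hδ) hβn]
  refine ⟨![(c + δ₁)/s, (c + δ₁)/s + L, (c - δ₂)/s, (c - δ₂)/s + L], ?_⟩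
  rintro x ⟨hx, h1, h2⟩
  have hfx : (betaT β)^[n] x - x = s * x - c := by
    rw [iterate_affine β n w x hx n le_rfl, hs]; ring
  rw [hfx] at h1 h2
  rcases le_or_gt 0 (s * x - c) with hpos | hneg
  · rw [abs_of_nonneg hpos] at h1 h2
    have hxl : (c + δ₁)/s ≤ x := by rw [div_le_iff₀ hspos]; nlinarith
    have hxu : x ≤ (c + δ₁)/s + 2 * L := by
      have : x ≤ (c + δ₂)/s := by rw [le_div_iff₀ hspos]; nlinarith
      have heq : (c + δ₂)/s = (c + δ₁)/s + (δ₂ - δ₁)/s := by ring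
      linarith [hlen, this, heq ▸ this]
    rcases le_or_gt x ((c + δ₁)/s + L) with hcase | hcase
    · exact Set.mem_iUnion.mpr ⟨0, by simp [hL.symm]; exact ⟨hxl, hcase⟩⟩
    · exact Set.mem_iUnion.mpr ⟨1, by
        simp only [Matrix.cons_val_one, Matrix.head_cons, Matrix.cons_val_zero, Set.mem_Icc]
        constructor
        · linarith
        · linarith⟩
  · rw [abs_of_neg hneg] at h1 h2
    have hxl : (c - δ₂)/s ≤ x := by rw [div_le_iff₀ hspos]; nlinarith
    have hxu : x ≤ (c - δ₂)/s + 2 * L := by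
      have : x ≤ (c - δ₁)/s := by rw [le_div_iff₀ hspos]; nlinarith
      have heq : (c - δ₁)/s = (c - δ₂)/s + (δ₂ - δ₁)/s := by ring
      linarith [hlen, this, heq ▸ this]
    rcases le_or_gt x ((c - δ₂)/s + L) with hcase | hcase
    · exact Set.mem_iUnion.mpr ⟨2, by
        simp only [Matrix.cons_val_two, Matrix.tail_cons, Matrix.head_cons, Set.mem_Icc]
        exact ⟨hxl, hcase⟩⟩
    · exact Set.mem_iUnion.mpr ⟨3, by
        simp only [Set.mem_Icc]
        have h3 : (![(c + δ₁)/s, (c + δ₁)/s + L, (c - δ₂)/s, (c - δ₂)/s + L] : Fin 4 → ℝ) 3 = (c - δ₂)/s + L := rfl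
        rw [h3]
        constructor <;> linarith⟩
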